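/- Let p ≥ 1 be an odd integer, h an integer coprime to p, and ζ = e^{2πi/p}. Then ((h/p + 1/2)) equals (i/(2p)) · Σ_{n=1}^{p−1} (−1)^n csc(πn/p) · ζ^{hn}. -/

import Mathlib

open Real Complex

private lemma geom_zero {p : ℕ} {x : ℂ} (hx : x ≠ 1) (hxp : x ^ p = 1) :
    ∑ n ∈ Finset.range p, x ^ n = 0 := by
  rw [geom_sum_eq hx, hxp, sub_self, zero_div]

private lemma sum_mul_geom {p : ℕ} {x : ℂ} (hx : x ≠ 1) (hxp : x ^ p = 1) :
    (∑ a ∈ Finset.range p, (a : ℂ) * x ^ a) * (x - 1) = p := by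
  have h0 : ∑ a ∈ Finset.range p, ((((a+1 : ℕ)) : ℂ) * x ^ (a+1) - (a:ℂ) * x ^ a)
      = (p : ℂ) * x ^ p - 0 := by
    rw [Finset.sum_range_sub (fun a => (a:ℂ) * x ^ a)]
    simp
  have h1 : ∑ a ∈ Finset.range p, x ^ (a+1) = 0 := by
    have hg := geom_zero hx hxp
    calc ∑ a ∈ Finset.range p, x ^ (a+1) = x * ∑ a ∈ Finset.range p, x ^ a := by
          rw [Finset.mul_sum]; exact Finset.sum_congr rfl (fun a _ => by ring)
      _ = 0 := by rw [hg, mul_zero]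
  calc (∑ a ∈ Finset.range p, (a : ℂ) * x ^ a) * (x - 1)
      = ∑ a ∈ Finset.range p, ((((a+1:ℕ)):ℂ) * x ^ (a+1) - (a:ℂ) * x ^ a)
        - ∑ a ∈ Finset.range p, x ^ (a+1) := by
        rw [Finset.sum_mul, ← Finset.sum_sub_distrib]
        refine Finset.sum_congr rfl (fun a _ => ?_)
        push_cast; ring
    _ = (p:ℂ) * x ^ p - 0 - 0 := by rw [h0, h1]
    _ = p := by rw [hxp]; ring

/-- The sawtooth function: `((r)) = 0` if `r ∈ ℤ`, else `r − ⌊r⌋ − 1/2`. -/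
noncomputable def sawtooth (r : ℝ) : ℝ :=
  if Int.fract r = 0 then 0 else r - ⌊r⌋ - 1 / 2

set_option maxHeartbeats 1000000 in
/-- For odd `p ≥ 1`, `h` coprime to `p`, and `ζ = e^{2πi/p}`:
`((h/p + 1/2)) = (i/(2p)) ∑_{n=1}^{p-1} (−1)^n csc(πn/p) ζ^{hn}`. -/
theorem stmt_3 (p : ℕ) (h : ℤ) (hp : 1 ≤ p) (hodd : Odd p)
    (hco : Int.gcd h (p : ℤ) = 1) :
    (sawtooth ((h : ℝ) / p + 1 / 2) : ℂ)
      = Complex.I / (2 * p) *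
        ∑ n ∈ Finset.Icc 1 (p - 1),
          (-1 : ℂ) ^ n * ((1 / Real.sin (Real.pi * n / p) : ℝ) : ℂ) *
            Complex.exp (2 * Real.pi * Complex.I / p) ^ (h * n) := by
  obtain ⟨q, hq⟩ := hodd
  have hpq : (p:ℤ) = 2*q+1 := by exact_mod_cast hq
  have hppos : 0 < (p:ℤ) := by omega
  have hpz : (p:ℤ) ≠ 0 := by omega
  have hp0 : (0:ℝ) < p := by exact_mod_cast hppos
  have hpc : (p:ℂ) ≠ 0 := Nat.cast_ne_zero.mpr (by omega)
  set c : ℂ := Complex.exp (2 * Real.pi * Complex.I / p) with hc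
  have hc0 : c ≠ 0 := Complex.exp_ne_zero _
  have hzpow : ∀ m : ℤ, c ^ m = Complex.exp (m * (2 * Real.pi * Complex.I / p)) :=
    fun m => (Complex.exp_int_mul _ m).symm
  have h2πI : (2 * (Real.pi:ℂ) * Complex.I) ≠ 0 :=
    mul_ne_zero (mul_ne_zero two_ne_zero (Complex.ofReal_ne_zero.mpr Real.pi_ne_zero)) Complex.I_ne_zero
  have hcp : c ^ ((p:ℕ):ℤ) = 1 := by
    rw [hzpow]
    have he : (((p:ℕ):ℤ):ℂ) * (2 * Real.pi * Complex.I / p) = 2 * Real.pi * Complex.I := by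
      push_cast; field_simp
    rw [he, Complex.exp_two_pi_mul_I]
  have hdvd : ∀ m : ℤ, c ^ m = 1 ↔ (p:ℤ) ∣ m := by
    intro m
    rw [hzpow, Complex.exp_eq_one_iff]
    constructor
    · rintro ⟨n, hn⟩
      refine ⟨n, ?_⟩
      have h3 : ((n:ℂ)*p) * (2*Real.pi*Complex.I/(p:ℂ)) = (n:ℂ) * (2*Real.pi*Complex.I) := by
        field_simp
      rw [← h3] at hn
      have h4 : (m:ℂ) = (n:ℂ) * p := mul_right_cancel₀ (div_ne_zero h2πI hpc) hn
      have h5 : m = n * p := by exact_mod_cast h4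
      rw [h5, mul_comm]
    · rintro ⟨n, rfl⟩
      refine ⟨n, ?_⟩
      push_cast
      field_simp
  have hcnat : c ^ (p:ℕ) = 1 := by rw [← zpow_natCast]; exact hcp
  have hcn_ne : ∀ n : ℕ, n ∈ Finset.Icc 1 (p-1) → c ^ n ≠ 1 := by
    intro n hn
    rw [Finset.mem_Icc] at hn
    rw [← zpow_natCast, Ne, hdvd]
    intro hd2
    have := Int.le_of_dvd (by exact_mod_cast hn.1) hd2
    omega
  have horth : ∀ m : ℤ, ∑ n ∈ Finset.range p, c ^ (m * (n:ℤ))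
      = if (p:ℤ) ∣ m then (p:ℂ) else 0 := by
    intro m
    have hterm : ∀ n : ℕ, c ^ (m * (n:ℤ)) = (c ^ m) ^ n := fun n => by
      rw [zpow_mul, zpow_natCast]
    by_cases hd2 : (p:ℤ) ∣ m
    · rw [if_pos hd2]
      have h1 : c ^ m = 1 := (hdvd m).mpr hd2
      calc ∑ n ∈ Finset.range p, c ^ (m * (n:ℤ))
          = ∑ _n ∈ Finset.range p, (1:ℂ) :=
            Finset.sum_congr rfl fun n _ => by rw [hterm, h1, one_pow]
        _ = p := by simp
    · rw [if_neg hd2]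
      have h1 : c ^ m ≠ 1 := fun hh => hd2 ((hdvd m).mp hh)
      have h2 : (c ^ m) ^ (p:ℕ) = 1 := by
        rw [← zpow_natCast (c ^ m), ← zpow_mul, mul_comm, zpow_mul, hcp, one_zpow]
      calc ∑ n ∈ Finset.range p, c ^ (m * (n:ℤ))
          = ∑ n ∈ Finset.range p, (c ^ m) ^ n := Finset.sum_congr rfl fun n _ => hterm n
        _ = 0 := geom_zero h1 h2
  -- pointwise trig identity
  have hpt : ∀ n ∈ Finset.Icc 1 (p-1),
      (-1 : ℂ) ^ n * ((1 / Real.sin (Real.pi * n / p) : ℝ) : ℂ) * c ^ (h * (n:ℤ))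
        = 2 * Complex.I * (c ^ ((h + ((q:ℤ)+1)) * (n:ℤ)) * (c ^ (n:ℕ) - 1)⁻¹) := by
    intro n hn
    have hx1 : c ^ (n:ℕ) ≠ 1 := hcn_ne n hn
    rw [Finset.mem_Icc] at hn
    have hn1 : 1 ≤ n := hn.1
    have hnp : n < p := by omega
    have hθpos : 0 < Real.pi * n / p := by
      apply div_pos (mul_pos Real.pi_pos (by exact_mod_cast hn1)) hp0
    have hθlt : Real.pi * n / p < Real.pi := by
      rw [div_lt_iff₀ hp0]
      have h6 : (n:ℝ) < p := by exact_mod_cast hnp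
      nlinarith [Real.pi_pos]
    have hsin_ne : Real.sin (Real.pi * n / p) ≠ 0 :=
      ne_of_gt (Real.sin_pos_of_pos_of_lt_pi hθpos hθlt)
    set t : ℂ := Complex.exp ((Real.pi * n / p : ℝ) * Complex.I) with ht
    have ht0 : t ≠ 0 := Complex.exp_ne_zero _
    have htt : t * t = c ^ (n:ℕ) := by
      rw [ht, hc, ← Complex.exp_add, ← Complex.exp_nat_mul]
      congr 1
      push_cast
      field_simp
      ring
    have htp : t ^ p = (-1:ℂ) ^ n := by
      rw [ht, ← Complex.exp_nat_mul]
      have he2 : (p:ℂ) * (((Real.pi * n / p : ℝ):ℂ) * Complex.I)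
          = (n:ℂ) * ((Real.pi:ℂ) * Complex.I) := by
        push_cast
        field_simp
      rw [he2, Complex.exp_nat_mul, Complex.exp_pi_mul_I]
    have h2It : (2 * Complex.I * t) ≠ 0 :=
      mul_ne_zero (mul_ne_zero two_ne_zero Complex.I_ne_zero) ht0
    have hsinc : ((Real.sin (Real.pi * n / p) : ℝ) : ℂ) = (t * t - 1) / (2 * Complex.I * t) := by
      rw [eq_div_iff h2It]
      have hneg : Complex.exp (-(((Real.pi * n / p : ℝ)):ℂ) * Complex.I) = t⁻¹ := by
        rw [ht, ← Complex.exp_neg]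
        congr 1
        ring
      rw [Complex.ofReal_sin, Complex.sin, hneg, ← ht]
      have hI : Complex.I ^ 2 = -1 := Complex.I_sq
      field_simp
      linear_combination (1 - t^2) * hI
    have hsplit : c ^ ((h + ((q:ℤ)+1)) * (n:ℤ)) = c ^ (h * (n:ℤ)) * (t ^ p * t) := by
      have h1 : c ^ ((h + ((q:ℤ)+1)) * (n:ℤ)) = c ^ (h*(n:ℤ)) * c ^ (((q:ℤ)+1) * (n:ℤ)) := by
        rw [← zpow_add₀ hc0, ← add_mul]
      have h2 : c ^ (((q:ℤ)+1) * (n:ℤ)) = t ^ (p+1) := by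
        rw [hzpow, ht, ← Complex.exp_nat_mul]
        congr 1
        push_cast [hq]
        field_simp
        ring
      rw [h1, h2, pow_succ]
    have hsub : c ^ (n:ℕ) - 1 ≠ 0 := sub_ne_zero.mpr hx1
    have htt1 : t * t - 1 ≠ 0 := by rw [htt]; exact hsub
    rw [hsplit, htp, ← htt, Complex.ofReal_div, Complex.ofReal_one, hsinc]
    field_simp
  -- Icc sums from range sums
  have hIcc : ∀ m : ℤ, ∑ n ∈ Finset.Icc 1 (p-1), c ^ (m * (n:ℤ))
      = (if (p:ℤ) ∣ m then (p:ℂ) else 0) - 1 := by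
    intro m
    have hins : Finset.range p = insert 0 (Finset.Icc 1 (p-1)) := by
      ext x
      simp only [Finset.mem_range, Finset.mem_insert, Finset.mem_Icc]
      omega
    have h00 : (0:ℕ) ∉ Finset.Icc 1 (p-1) := by simp
    have horth' := horth m
    rw [hins, Finset.sum_insert h00] at horth'
    have h01 : c ^ (m * ((0:ℕ):ℤ)) = 1 := by norm_num
    rw [h01] at horth'
    exact eq_sub_of_add_eq' horth'
  -- geometric-derivative identity per n
  have hB : ∀ n ∈ Finset.Icc 1 (p-1), 2 * Complex.I * (c ^ ((h + ((q:ℤ)+1)) * (n:ℤ)) * (c ^ (n:ℕ) - 1)⁻¹)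
      = 2 * Complex.I * ((p:ℂ)⁻¹ * ∑ a ∈ Finset.range p, (a:ℂ) * c ^ ((h + ((q:ℤ)+1) + a) * (n:ℤ))) := by
    intro n hn
    have hx1 : c ^ (n:ℕ) ≠ 1 := hcn_ne n hn
    have hsub : c ^ (n:ℕ) - 1 ≠ 0 := sub_ne_zero.mpr hx1
    have hxp : (c ^ (n:ℕ)) ^ p = 1 := by rw [← pow_mul, mul_comm, pow_mul, hcnat, one_pow]
    have hgeom := sum_mul_geom hx1 hxp
    have h1 : ∑ a ∈ Finset.range p, (a:ℂ) * c ^ ((h + ((q:ℤ)+1) + (a:ℤ)) * (n:ℤ))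
        = c ^ ((h + ((q:ℤ)+1)) * (n:ℤ)) * ∑ a ∈ Finset.range p, (a:ℂ) * (c ^ (n:ℕ)) ^ a := by
      rw [Finset.mul_sum]
      refine Finset.sum_congr rfl (fun a _ => ?_)
      have h2 : c ^ (((a:ℕ):ℤ) * (n:ℤ)) = (c ^ (n:ℕ)) ^ a := by
        rw [show (((a:ℕ):ℤ) * (n:ℤ)) = ((n * a : ℕ) : ℤ) by push_cast; ring, zpow_natCast, pow_mul]
      rw [add_mul, zpow_add₀ hc0, h2]
      ring
    rw [h1]
    have h3 : ∑ a ∈ Finset.range p, (a:ℂ) * (c ^ (n:ℕ)) ^ a = (p:ℂ) / (c ^ (n:ℕ) - 1) := by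
      rw [eq_div_iff hsub]; exact hgeom
    rw [h3]
    field_simp
  -- integer bookkeeping
  set d : ℤ := (h + (q:ℤ)) / (p:ℤ) with hd
  set e : ℤ := (h + (q:ℤ)) % (p:ℤ) with he
  have he0 : 0 ≤ e := Int.emod_nonneg _ hpz
  have hep : e < p := Int.emod_lt_of_pos _ hppos
  have hed : (p:ℤ) * d + e = h + q := Int.mul_ediv_add_emod _ _
  set a0 : ℤ := 2*(q:ℤ) - e with ha0
  have ha0nn : 0 ≤ a0 := by omega
  have ha0lt : a0 < p := by omega
  have hka0 : (p:ℤ) ∣ (h + ((q:ℤ)+1) + a0) := ⟨d + 1, by linear_combination -hed - hpq⟩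
  have hanonneg : ∀ a : ℕ, (0:ℤ) ≤ (a:ℤ) := fun a => Int.natCast_nonneg a
  have hchar : ∀ a : ℕ, a ∈ Finset.range p → ((p:ℤ) ∣ (h + ((q:ℤ)+1) + a) ↔ (a:ℤ) = a0) := by
    intro a ha
    rw [Finset.mem_range] at ha
    have haZ : (a:ℤ) < p := by exact_mod_cast ha
    have haZ0 : (0:ℤ) ≤ a := hanonneg a
    constructor
    · intro hdvd2
      have h2 : (p:ℤ) ∣ ((a:ℤ) - a0) := by
        have h2' := dvd_sub hdvd2 hka0
        have h2e : (h + ((q:ℤ)+1) + a) - (h + ((q:ℤ)+1) + a0) = (a:ℤ) - a0 := by ring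
        rwa [h2e] at h2'
      have h3 : (a:ℤ) - a0 = 0 := Int.eq_zero_of_abs_lt_dvd h2 (by rw [abs_lt]; omega)
      omega
    · intro haa
      have : h + ((q:ℤ)+1) + a = h + ((q:ℤ)+1) + a0 := by rw [haa]
      rw [this]
      exact hka0
  -- the weighted indicator sum
  have hsumA : ∑ a ∈ Finset.range p, (a:ℂ) * ((if (p:ℤ) ∣ (h + ((q:ℤ)+1) + a) then (p:ℂ) else 0) - 1)
      = (p:ℂ) * a0 - (p:ℂ) * q := by
    have hsplit2 : ∀ a ∈ Finset.range p,
        (a:ℂ) * ((if (p:ℤ) ∣ (h + ((q:ℤ)+1) + a) then (p:ℂ) else 0) - 1)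
        = (if (p:ℤ) ∣ (h + ((q:ℤ)+1) + a) then (a:ℂ) * p else 0) - a := by
      intro a _
      by_cases hif : (p:ℤ) ∣ (h + ((q:ℤ)+1) + a)
      · rw [if_pos hif, if_pos hif]; ring
      · rw [if_neg hif, if_neg hif]; ring
    rw [Finset.sum_congr rfl hsplit2, Finset.sum_sub_distrib]
    have h1 : ∑ a ∈ Finset.range p, (if (p:ℤ) ∣ (h + ((q:ℤ)+1) + a) then (a:ℂ) * p else 0)
        = ((a0:ℂ)) * p := by
      rw [Finset.sum_eq_single a0.toNat]
      · have hmem : a0.toNat ∈ Finset.range p := Finset.mem_range.mpr (by omega)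
        have heq : ((a0.toNat:ℕ):ℤ) = a0 := Int.toNat_of_nonneg ha0nn
        rw [if_pos ((hchar _ hmem).mpr heq)]
        have : ((a0.toNat:ℕ):ℂ) = ((a0:ℤ):ℂ) := by exact_mod_cast congrArg (Int.cast : ℤ → ℂ) heq
        rw [this]
      · intro b hb hbne
        rw [if_neg]
        intro hdd
        have hbeq : (b:ℤ) = a0 := (hchar b hb).mp hdd
        have : b = a0.toNat := by omega
        exact hbne this
      · intro hnotin
        exact absurd (Finset.mem_range.mpr (by omega)) hnotin
    have h2 : ∑ a ∈ Finset.range p, (a:ℂ) = (p:ℂ) * q := by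
      have hnat : ∑ a ∈ Finset.range p, a = p * q := by
        rw [Finset.sum_range_id, show p - 1 = 2*q by omega, show p * (2*q) = p*q*2 by ring]
        exact Nat.mul_div_cancel _ (by norm_num)
      calc ∑ a ∈ Finset.range p, (a:ℂ) = ((∑ a ∈ Finset.range p, a : ℕ) : ℂ) := by push_cast; rfl
        _ = (p:ℂ) * q := by rw [hnat]; push_cast; ring
    rw [h1, h2]
    ring
  -- sawtooth evaluation
  have hpqR : (p:ℝ) = 2*(q:ℝ)+1 := by exact_mod_cast hpq
  have hedR : (p:ℝ) * (d:ℝ) + (e:ℝ) = (h:ℝ) + q := by exact_mod_cast hed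
  have heR0 : (0:ℝ) ≤ e := by exact_mod_cast he0
  have heRp : (e:ℝ) < p := by exact_mod_cast hep
  have h2q1 : (0:ℝ) < 2*(q:ℝ)+1 := by positivity
  have hfr : (h:ℝ)/p + 1/2 = (d:ℝ) + (2*(e:ℝ)+1)/(2*p) := by
    have hh : (h:ℝ) = p*(d:ℝ) + e - q := by linarith
    rw [hh, hpqR]
    field_simp
    ring
  have hfloor : ⌊(h:ℝ)/p + 1/2⌋ = d := by
    rw [hfr, Int.floor_intCast_add]
    have h01 : (0:ℝ) ≤ (2*(e:ℝ)+1)/(2*p) := by positivity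
    have h02 : (2*(e:ℝ)+1)/(2*p) < 1 := by
      rw [div_lt_one (by positivity)]
      have heRp' : (e:ℝ) ≤ (p:ℝ) - 1 := by
        have : e ≤ (p:ℤ) - 1 := by omega
        have h9 : (e:ℝ) ≤ ((p:ℤ):ℝ) - 1 := by exact_mod_cast this
        simpa using h9
      linarith
    rw [Int.floor_eq_zero_iff.mpr ⟨h01, h02⟩, add_zero]
  have hfrac : Int.fract ((h:ℝ)/p + 1/2) ≠ 0 := by
    rw [Int.fract, hfloor, hfr]
    have hpos : (0:ℝ) < (2*(e:ℝ)+1)/(2*p) := by positivity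
    intro hcon
    rw [add_sub_cancel_left] at hcon
    linarith
  have hsaw : sawtooth ((h:ℝ)/p + 1/2) = ((e:ℝ) - q)/p := by
    rw [sawtooth, if_neg hfrac, hfloor, hfr, hpqR]
    field_simp
    ring
  -- assemble
  rw [hsaw, Finset.sum_congr rfl hpt, Finset.sum_congr rfl hB]
  have hstep : ∑ n ∈ Finset.Icc 1 (p-1),
      2 * Complex.I * ((p:ℂ)⁻¹ * ∑ a ∈ Finset.range p, (a:ℂ) * c ^ ((h + ((q:ℤ)+1) + a) * (n:ℤ)))
      = 2 * Complex.I * (p:ℂ)⁻¹ * ((p:ℂ) * a0 - (p:ℂ) * q) := by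
    calc ∑ n ∈ Finset.Icc 1 (p-1),
        2 * Complex.I * ((p:ℂ)⁻¹ * ∑ a ∈ Finset.range p, (a:ℂ) * c ^ ((h + ((q:ℤ)+1) + a) * (n:ℤ)))
        = 2 * Complex.I * (p:ℂ)⁻¹ * ∑ n ∈ Finset.Icc 1 (p-1),
            ∑ a ∈ Finset.range p, (a:ℂ) * c ^ ((h + ((q:ℤ)+1) + a) * (n:ℤ)) := by
          rw [Finset.mul_sum]
          exact Finset.sum_congr rfl (fun n _ => by ring)
      _ = 2 * Complex.I * (p:ℂ)⁻¹ * ∑ a ∈ Finset.range p,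
            ∑ n ∈ Finset.Icc 1 (p-1), (a:ℂ) * c ^ ((h + ((q:ℤ)+1) + a) * (n:ℤ)) := by
          rw [Finset.sum_comm]
      _ = 2 * Complex.I * (p:ℂ)⁻¹ * ∑ a ∈ Finset.range p,
            (a:ℂ) * ((if (p:ℤ) ∣ (h + ((q:ℤ)+1) + a) then (p:ℂ) else 0) - 1) := by
          congr 1
          refine Finset.sum_congr rfl (fun a _ => ?_)
          rw [← Finset.mul_sum, hIcc]
      _ = 2 * Complex.I * (p:ℂ)⁻¹ * ((p:ℂ) * a0 - (p:ℂ) * q) := by rw [hsumA]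
  rw [hstep]
  have hI : Complex.I ^ 2 = -1 := Complex.I_sq
  have ha0C : ((a0:ℤ):ℂ) = 2*(q:ℂ) - ((e:ℤ):ℂ) := by rw [ha0]; push_cast; ring
  rw [ha0C]
  push_cast
  field_simp
  linear_combination (((e:ℤ):ℂ) - ((q:ℕ):ℂ)) * hI
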